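/- MSM estimating equation unbiasedness: if ψ(ā_t; θ0) = E[Y_t(ā_t)] for the true parameter θ0, then under sequential exchangeability, consistency and positivity, E[ h_t(Ā_t) (Y_t − ψ(Ā_t; θ0)) W_t ] = 0, where W_t = Π_{s=1}^t π(A_s | Ā_{s−1}) / π(A_s | Ā_{s−1}, X̄_s, Ȳ_{s−1}). -/

import Mathlib

open MeasureTheory ProbabilityTheory

/-- MSM estimating equation unbiasedness (single time point `t = 1`,
one discrete covariate `X`, discrete treatment `A`, outcome `Y`). If
`ψ(a) = E[Y(a)]` at the true parameter, then under consistency, exchangeability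
(`Y(a) ⫫ A | X`) and positivity,
`E[ h(A) · (Y − ψ(A)) · W ] = 0`, where `W = π(A) / π(A | X)` is the stabilized
inverse probability weight. -/
theorem stmt_6 {Ω : Type*} [MeasurableSpace Ω] (μ : Measure Ω) [IsProbabilityMeasure μ]
    (X A : Ω → ℕ) (Y : Ω → ℝ) (Ycf : ℕ → Ω → ℝ)
    (hX : Measurable X) (hA : Measurable A) (hY : Measurable Y)
    (hYcf : ∀ a, Measurable (Ycf a))
    (h : ℕ → ℝ)              -- arbitrary bounded function of the treatment
    (ψ : ℕ → ℝ)              -- marginal structural model at the true parameter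
    (C : ℝ) (hhbd : ∀ a, |h a| ≤ C) (hYbd : ∀ᵐ ω ∂μ, |Y ω| ≤ C)
    (hYcfbd : ∀ a, ∀ᵐ ω ∂μ, |Ycf a ω| ≤ C)
    -- ψ is the true counterfactual mean
    (hψ : ∀ a, ψ a = ∫ ω, Ycf a ω ∂μ)
    -- consistency: Y = Y(A) a.s.
    (hcons : ∀ᵐ ω ∂μ, Y ω = Ycf (A ω) ω)
    -- exchangeability: Y(a) ⫫ A given X = x
    (hexch : ∀ a x : ℕ, 0 < μ {ω | X ω = x} →
      IndepFun (Ycf a) A (μ[|{ω | X ω = x}]))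
    -- positivity: propensity scores bounded below by ε > 0
    (ε : ℝ) (hε : 0 < ε)
    (hpos : ∀ x : ℕ, 0 < μ {ω | X ω = x} → ∀ a : ℕ, 0 < μ {ω | A ω = a} →
      ε ≤ (μ {ω | A ω = a ∧ X ω = x}).toReal / (μ {ω | X ω = x}).toReal) :
    ∫ ω, h (A ω) * (Y ω - ψ (A ω)) *
        ((μ {ω' | A ω' = A ω}).toReal /
          ((μ {ω' | A ω' = A ω ∧ X ω' = X ω}).toReal / (μ {ω' | X ω' = X ω}).toReal)) ∂μ
      = 0 := by
  classical
  -- abbreviations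
  set w : ℕ → ℕ → ℝ := fun a x =>
    (μ {ω' | A ω' = a}).toReal /
      ((μ {ω' | A ω' = a ∧ X ω' = x}).toReal / (μ {ω' | X ω' = x}).toReal) with hw
  set F : Ω → ℝ := fun ω => h (A ω) * (Y ω - ψ (A ω)) * w (A ω) (X ω) with hF
  show ∫ ω, F ω ∂μ = 0
  -- measurability of the basic sets
  have mSA : ∀ a : ℕ, MeasurableSet {ω | A ω = a} := fun a =>
    hA (measurableSet_singleton a)
  have mSX : ∀ x : ℕ, MeasurableSet {ω | X ω = x} := fun x =>
    hX (measurableSet_singleton x)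
  have hSeq : ∀ a x : ℕ, {ω | A ω = a ∧ X ω = x} = {ω | A ω = a} ∩ {ω | X ω = x} := by
    intro a x; rfl
  have mS : ∀ a x : ℕ, MeasurableSet {ω | A ω = a ∧ X ω = x} := fun a x => by
    rw [hSeq]; exact (mSA a).inter (mSX x)
  -- C is nonnegative
  have hC0 : 0 ≤ C := le_trans (abs_nonneg _) (hhbd 0)
  -- |ψ a| ≤ C
  have hψbd : ∀ a, |ψ a| ≤ C := by
    intro a
    rw [hψ a, ← Real.norm_eq_abs]
    calc ‖∫ ω, Ycf a ω ∂μ‖ ≤ C * (μ Set.univ).toReal := by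
          apply norm_integral_le_of_norm_le_const
          filter_upwards [hYcfbd a] with ω hω
          simpa [Real.norm_eq_abs] using hω
      _ = C := by simp
  -- toReal of measures of sets is at most 1
  have hle1 : ∀ s : Set Ω, (μ s).toReal ≤ 1 := by
    intro s
    have : μ s ≤ 1 := prob_le_one
    simpa using ENNReal.toReal_mono (by simp) this
  -- weight bounds
  have hwbd : ∀ a x, 0 ≤ w a x ∧ w a x ≤ 1 / ε := by
    intro a x
    simp only [hw]
    by_cases hs : (μ {ω' | A ω' = a ∧ X ω' = x}).toReal = 0
    · rw [hs, zero_div, div_zero]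
      exact ⟨le_refl 0, by positivity⟩
    · -- positive joint measure: all three measures positive
      have hSpos : 0 < μ {ω | A ω = a ∧ X ω = x} := by
        rcases eq_or_lt_of_le (zero_le : 0 ≤ μ {ω | A ω = a ∧ X ω = x}) with h0 | h0
        · exact absurd (by rw [← h0]; simp) hs
        · exact h0
      have hApos : 0 < μ {ω | A ω = a} := lt_of_lt_of_le hSpos
        (measure_mono fun ω hω => hω.1)
      have hXpos : 0 < μ {ω | X ω = x} := lt_of_lt_of_le hSpos
        (measure_mono fun ω hω => hω.2)
      have hd := hpos x hXpos a hApos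
      have hdpos : 0 < (μ {ω | A ω = a ∧ X ω = x}).toReal / (μ {ω | X ω = x}).toReal :=
        lt_of_lt_of_le hε hd
      constructor
      · positivity
      · calc (μ {ω' | A ω' = a}).toReal /
            ((μ {ω' | A ω' = a ∧ X ω' = x}).toReal / (μ {ω' | X ω' = x}).toReal)
            ≤ 1 / ((μ {ω' | A ω' = a ∧ X ω' = x}).toReal / (μ {ω' | X ω' = x}).toReal) := by
              gcongr
              exact hle1 _
          _ ≤ 1 / ε := by gcongr
  -- measurability/integrability of F
  have hFmeas : Measurable F := by
    rw [hF]
    have h1 : Measurable fun ω => h (A ω) := (measurable_of_countable h).comp hA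
    have h2 : Measurable fun ω => ψ (A ω) := (measurable_of_countable ψ).comp hA
    have h3 : Measurable fun ω => w (A ω) (X ω) :=
      (measurable_of_countable (fun p : ℕ × ℕ => w p.1 p.2)).comp (hA.prodMk hX)
    exact (h1.mul (hY.sub h2)).mul h3
  have hFint : Integrable F μ := by
    refine (integrable_const (C * (C + C) * (1/ε))).mono' hFmeas.aestronglyMeasurable ?_
    filter_upwards [hYbd] with ω hω
    simp only [hF]
    rw [Real.norm_eq_abs, abs_mul, abs_mul]
    have hYψ : |Y ω - ψ (A ω)| ≤ C + C :=
      (abs_sub _ _).trans (add_le_add hω (hψbd _))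
    have hwa := hwbd (A ω) (X ω)
    rw [abs_of_nonneg hwa.1]
    exact mul_le_mul (mul_le_mul (hhbd _) hYψ (abs_nonneg _) hC0) hwa.2 hwa.1
      (by positivity)
  -- integrability of the counterfactual differences
  have hYcfint : ∀ a, Integrable (Ycf a) μ := by
    intro a
    refine (integrable_const C).mono' (hYcf a).aestronglyMeasurable ?_
    filter_upwards [hYcfbd a] with ω hω
    simpa [Real.norm_eq_abs] using hω
  have hgint : ∀ a, Integrable (fun ω => Ycf a ω - ψ a) μ := fun a =>
    (hYcfint a).sub (integrable_const _)
  -- the key independence computation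
  have key : ∀ a x : ℕ, 0 < μ {ω | X ω = x} →
      ∫ ω in {ω | A ω = a ∧ X ω = x}, (Ycf a ω - ψ a) ∂μ
      = ((μ {ω | A ω = a ∧ X ω = x}).toReal / (μ {ω | X ω = x}).toReal) *
        ∫ ω in {ω | X ω = x}, (Ycf a ω - ψ a) ∂μ := by
    intro a x hx
    set s := {ω | X ω = x} with hsdef
    have hxr : 0 < (μ s).toReal := ENNReal.toReal_pos hx.ne' (measure_ne_top μ s)
    have hne : (μ s).toReal ≠ 0 := ne_of_gt hxr
    have hind : IndepFun (fun ω => Ycf a ω - ψ a)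
        (fun ω => Set.indicator ({a} : Set ℕ) (1 : ℕ → ℝ) (A ω)) (μ[|s]) :=
      (hexch a x hx).comp
        (measurable_id.sub measurable_const : Measurable fun y : ℝ => y - ψ a)
        (measurable_of_countable (fun n : ℕ => Set.indicator ({a} : Set ℕ) (1 : ℕ → ℝ) n))
    have hm1 : AEStronglyMeasurable (fun ω => Ycf a ω - ψ a) (μ[|s]) :=
      ((hYcf a).sub measurable_const).aestronglyMeasurable
    have hm2 : AEStronglyMeasurable
        (fun ω => Set.indicator ({a} : Set ℕ) (1 : ℕ → ℝ) (A ω)) (μ[|s]) :=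
      (((measurable_of_countable (fun n : ℕ =>
        Set.indicator ({a} : Set ℕ) (1 : ℕ → ℝ) n))).comp hA).aestronglyMeasurable
    have hmul := hind.integral_fun_mul_eq_mul_integral hm1 hm2
    -- rewrite indicator composed with A as indicator of the preimage
    have hindrw : (fun ω => Set.indicator ({a} : Set ℕ) (1 : ℕ → ℝ) (A ω))
        = Set.indicator {ω | A ω = a} (1 : Ω → ℝ) := by
      funext ω
      by_cases hmem : A ω = a
      · simp [hmem]
      · simp [Set.indicator_of_notMem, hmem]
    have hmeq : (s ∩ {ω | A ω = a}) = {ω | A ω = a ∧ X ω = x} := by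
      ext ω
      simp only [hsdef, Set.mem_inter_iff, Set.mem_setOf_eq]
      exact and_comm
    -- conditional measure integrals
    have hcond : (μ[|s]) = (μ s)⁻¹ • μ.restrict s := rfl
    have hI2 : ∫ ω, Set.indicator ({a} : Set ℕ) (1 : ℕ → ℝ) (A ω) ∂(μ[|s])
        = ((μ s).toReal)⁻¹ * (μ {ω | A ω = a ∧ X ω = x}).toReal := by
      rw [hindrw, integral_indicator_one (mSA a), measureReal_def, cond_apply (mSX x), hmeq,
        ENNReal.toReal_mul, ENNReal.toReal_inv]
    have hI1 : ∫ ω, (Ycf a ω - ψ a) ∂(μ[|s])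
        = ((μ s).toReal)⁻¹ * ∫ ω in s, (Ycf a ω - ψ a) ∂μ := by
      rw [hcond, integral_smul_measure, ENNReal.toReal_inv, smul_eq_mul]
    have hI0 : ∫ ω, (Ycf a ω - ψ a) *
        Set.indicator ({a} : Set ℕ) (1 : ℕ → ℝ) (A ω) ∂(μ[|s])
        = ((μ s).toReal)⁻¹ * ∫ ω in {ω | A ω = a ∧ X ω = x}, (Ycf a ω - ψ a) ∂μ := by
      rw [hcond, integral_smul_measure, ENNReal.toReal_inv, smul_eq_mul]
      congr 1
      have hpt : (fun ω => (Ycf a ω - ψ a) *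
          Set.indicator ({a} : Set ℕ) (1 : ℕ → ℝ) (A ω))
          = Set.indicator {ω | A ω = a} (fun ω => Ycf a ω - ψ a) := by
        funext ω
        by_cases hmem : A ω = a
        · simp [hmem]
        · simp [Set.indicator_of_notMem, hmem]
      rw [hpt, setIntegral_indicator (mSA a), hmeq]
    rw [hI0, hI1, hI2] at hmul
    set IS := ∫ ω in {ω | A ω = a ∧ X ω = x}, (Ycf a ω - ψ a) ∂μ with hIS
    set G := ∫ ω in s, (Ycf a ω - ψ a) ∂μ with hG
    calc IS = (μ s).toReal * (((μ s).toReal)⁻¹ * IS) := by field_simp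
      _ = (μ s).toReal * (((μ s).toReal)⁻¹ * G *
            (((μ s).toReal)⁻¹ * (μ {ω | A ω = a ∧ X ω = x}).toReal)) := by rw [hmul]
      _ = (μ {ω | A ω = a ∧ X ω = x}).toReal / (μ s).toReal * G := by
            field_simp
  -- per-cell value of the integral of F
  have piece : ∀ a x : ℕ, ∫ ω in {ω | A ω = a ∧ X ω = x}, F ω ∂μ
      = (h a * (μ {ω | A ω = a}).toReal) *
        ∫ ω in {ω | X ω = x}, (Ycf a ω - ψ a) ∂μ := by
    intro a x
    by_cases hx : μ {ω | X ω = x} = 0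
    · have hS0 : μ {ω | A ω = a ∧ X ω = x} = 0 :=
        measure_mono_null (fun ω hω => hω.2) hx
      rw [Measure.restrict_eq_zero.mpr hS0, Measure.restrict_eq_zero.mpr hx]
      simp
    · have hx' : 0 < μ {ω | X ω = x} := pos_iff_ne_zero.mpr hx
      by_cases ha : μ {ω | A ω = a} = 0
      · have hS0 : μ {ω | A ω = a ∧ X ω = x} = 0 :=
          measure_mono_null (fun ω hω => hω.1) ha
        rw [Measure.restrict_eq_zero.mpr hS0, ha]
        simp
      · have ha' : 0 < μ {ω | A ω = a} := pos_iff_ne_zero.mpr ha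
        have hd := hpos x hx' a ha'
        have hXr : 0 < (μ {ω | X ω = x}).toReal :=
          ENNReal.toReal_pos hx (measure_ne_top μ _)
        have hdpos : 0 < (μ {ω | A ω = a ∧ X ω = x}).toReal / (μ {ω | X ω = x}).toReal :=
          lt_of_lt_of_le hε hd
        have hSr : 0 < (μ {ω | A ω = a ∧ X ω = x}).toReal := by
          by_contra hcon
          push_neg at hcon
          have h0 : (μ {ω | A ω = a ∧ X ω = x}).toReal = 0 :=
            le_antisymm hcon ENNReal.toReal_nonneg
          rw [h0] at hdpos
          simp at hdpos
        -- on the cell, F equals a constant times (Ycf a - ψ a)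
        have hfe : ∫ ω in {ω | A ω = a ∧ X ω = x}, F ω ∂μ
            = ∫ ω in {ω | A ω = a ∧ X ω = x},
                (h a * w a x) * (Ycf a ω - ψ a) ∂μ := by
          apply setIntegral_congr_ae (mS a x)
          filter_upwards [hcons] with ω hω hmem
          obtain ⟨h1, h2⟩ := hmem
          simp only [hF, hω, h1, h2]
          ring
        rw [hfe, integral_const_mul, key a x hx']
        simp only [hw]
        have hXne : (μ {ω | X ω = x}).toReal ≠ 0 := ne_of_gt hXr
        have hSne : (μ {ω | A ω = a ∧ X ω = x}).toReal ≠ 0 := ne_of_gt hSr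
        field_simp
  -- row sums of the counterfactual integrals vanish
  have hGsum : ∀ a : ℕ, HasSum (fun x => ∫ ω in {ω | X ω = x}, (Ycf a ω - ψ a) ∂μ) 0 := by
    intro a
    have hU : (⋃ x : ℕ, {ω | X ω = x}) = Set.univ := by
      ext ω
      simp only [Set.mem_iUnion, Set.mem_setOf_eq, Set.mem_univ, iff_true]
      exact ⟨X ω, rfl⟩
    have hdisj : Pairwise (Function.onFun Disjoint fun x : ℕ => {ω | X ω = x}) := by
      intro i j hij
      refine Set.disjoint_left.mpr fun ω h1 h2 => hij ?_
      exact h1.symm.trans h2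
    have hion : IntegrableOn (fun ω => Ycf a ω - ψ a) (⋃ x : ℕ, {ω | X ω = x}) μ :=
      (hgint a).integrableOn
    have h0 := hasSum_integral_iUnion mSX hdisj hion
    rw [hU, setIntegral_univ] at h0
    have hz : ∫ ω, (Ycf a ω - ψ a) ∂μ = 0 := by
      rw [integral_sub (hYcfint a) (integrable_const _), integral_const]
      simp [← hψ a]
    rwa [hz] at h0
  -- each row integral of F vanishes
  have row : ∀ a : ℕ, ∫ ω in {ω | A ω = a}, F ω ∂μ = 0 := by
    intro a
    have hU : (⋃ x : ℕ, {ω | A ω = a ∧ X ω = x}) = {ω | A ω = a} := by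
      ext ω
      simp only [Set.mem_iUnion, Set.mem_setOf_eq]
      exact ⟨fun ⟨x, hx⟩ => hx.1, fun hAa => ⟨X ω, hAa, rfl⟩⟩
    have hdisj : Pairwise (Function.onFun Disjoint fun x : ℕ => {ω | A ω = a ∧ X ω = x}) := by
      intro i j hij
      refine Set.disjoint_left.mpr fun ω h1 h2 => hij ?_
      exact h1.2.symm.trans h2.2
    have hion : IntegrableOn F (⋃ x : ℕ, {ω | A ω = a ∧ X ω = x}) μ :=
      hFint.integrableOn
    have h1 := hasSum_integral_iUnion (mS a) hdisj hion
    rw [hU] at h1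
    have h2 : HasSum (fun x => ∫ ω in {ω | A ω = a ∧ X ω = x}, F ω ∂μ) 0 := by
      have h3 := (hGsum a).mul_left (h a * (μ {ω | A ω = a}).toReal)
      rw [mul_zero] at h3
      simpa only [piece a] using h3
    exact h1.unique h2
  -- conclude
  have hU : (⋃ a : ℕ, {ω | A ω = a}) = Set.univ := by
    ext ω
    simp only [Set.mem_iUnion, Set.mem_setOf_eq, Set.mem_univ, iff_true]
    exact ⟨A ω, rfl⟩
  have hdisj : Pairwise (Function.onFun Disjoint fun a : ℕ => {ω | A ω = a}) := by
    intro i j hij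
    refine Set.disjoint_left.mpr fun ω ha hb => hij ?_
    exact ha.symm.trans hb
  have hion : IntegrableOn F (⋃ a : ℕ, {ω | A ω = a}) μ := hFint.integrableOn
  have h1 := hasSum_integral_iUnion mSA hdisj hion
  rw [hU, setIntegral_univ] at h1
  simp only [row] at h1
  exact (hasSum_zero.unique h1).symm
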